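/- Let f : ℕ → ℝ satisfy f(0) = 0, f(c) > 0 for all c ≥ 1, and be concave in the sense that f(j+1) − f(j) is nonincreasing in j. Then for every greedy cover φ' of a set cover instance and every cover φ of the same instance, the cost of φ' satisfies ∑_i f(c'_i) ≤ R · ∑_i f(c_i), where c'_i and c_i are the part sizes of φ' and φ respectively, and R := max { (1/f(c)) ∑_{j=1}^{c} f(j)/j : 1 ≤ c ≤ max_i |S_i| }. In other words, the greedy algorithm approximates the set cover problem with concave cost f within the factor R. -/

import Mathlib

open Finset

/-- A set cover instance: a collection of subsets of a finite ground set `V` whose union is `V`. -/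
structure SetCoverInstance (V : Type*) [Fintype V] [DecidableEq V] where
  sets : Finset (Finset V)
  covers : ∀ v : V, ∃ S ∈ sets, v ∈ S

/-- A cover: an assignment of each element to a subset of the collection containing it. -/
structure Cover {V : Type*} [Fintype V] [DecidableEq V] (I : SetCoverInstance V) where
  φ : V → Finset V
  mem_sets : ∀ v, φ v ∈ I.sets
  self_mem : ∀ v, v ∈ φ v

variable {V : Type*} [Fintype V] [DecidableEq V] {I : SetCoverInstance V}

/-- `a_v`: the size of the part containing `v`. -/
def Cover.a (c : Cover I) (v : V) : ℕ :=
  (Finset.univ.filter fun w => c.φ w = c.φ v).card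

/-- `c_i`: the size of the part assigned to subset `S`. -/
def Cover.partSize (c : Cover I) (S : Finset V) : ℕ :=
  (Finset.univ.filter fun w => c.φ w = S).card

/-- A greedy cover: its parts can be ordered `P 0, …, P (m-1)` so that each `P j` is obtained by
choosing a subset covering a maximum number of yet-uncovered elements. -/
def Cover.IsGreedy (c : Cover I) : Prop :=
  ∃ (m : ℕ) (P : ℕ → Finset V),
    (∀ v : V, ∃ j < m, v ∈ P j) ∧
    (∀ j < m, ∃ S ∈ I.sets,
      P j = S \ (Finset.range j).biUnion P ∧
      ∀ T ∈ I.sets, (T \ (Finset.range j).biUnion P).card ≤ (P j).card) ∧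
    (∀ j < m, ∀ v ∈ P j, (Finset.univ.filter fun w => c.φ w = c.φ v) = P j)

/-- The generalized `p`-mean of the part sizes `a_v`, over the elements. -/
noncomputable def Cover.pMean (c : Cover I) (p : ℝ) : ℝ :=
  ((1 / (Fintype.card V : ℝ)) * ∑ v : V, (c.a v : ℝ) ^ p) ^ (1 / p)

/-- for a concave cost function `f` with `f 0 = 0` and `f c > 0` for `c ≥ 1`,
every greedy cover `c'` and every cover `c` satisfy `∑ f(c'_i) ≤ R · ∑ f(c_i)`, where
`R = max { (1/f(m)) ∑_{j=1}^m f(j)/j : 1 ≤ m ≤ max_i |S_i| }`. -/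

lemma ratio_anti (f : ℕ → ℝ) (hf0 : f 0 = 0)
    (hfpos : ∀ m : ℕ, 1 ≤ m → 0 < f m)
    (hconc : ∀ j : ℕ, f (j + 2) - f (j + 1) ≤ f (j + 1) - f j) :
    ∀ a b : ℕ, 1 ≤ a → a ≤ b → f b / b ≤ f a / a := by
  have hd : Antitone (fun j => f (j + 1) - f j) :=
    antitone_nat_of_succ_le fun n => hconc n
  have key : ∀ n : ℕ, 1 ≤ n → f (n + 1) / (n + 1) ≤ f n / n := by
    intro n hn
    have h1 : (n : ℝ) * (f (n + 1) - f n) ≤ ∑ j ∈ range n, (f (j + 1) - f j) := by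
      calc (n : ℝ) * (f (n + 1) - f n) = ∑ _j ∈ range n, (f (n + 1) - f n) := by
            rw [Finset.sum_const, card_range, nsmul_eq_mul]
        _ ≤ ∑ j ∈ range n, (f (j + 1) - f j) := by
            apply Finset.sum_le_sum
            intro j hj
            exact hd (Nat.le_of_lt_succ (Nat.lt_succ_of_lt (mem_range.mp hj)))
    rw [Finset.sum_range_sub f, hf0] at h1
    have hn0 : (0:ℝ) < n := by exact_mod_cast hn
    have hn1 : (0:ℝ) < (n:ℝ) + 1 := by linarith
    rw [div_le_div_iff₀ (by push_cast; linarith) hn0]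
    push_cast
    nlinarith
  intro a b ha hab
  induction b, hab using Nat.le_induction with
  | base => exact le_refl _
  | succ n hn ih =>
    have h := key n (le_trans ha hn)
    push_cast
    push_cast at h ih
    linarith

lemma rank_sum {α : Type*} [DecidableEq α] (f : ℕ → ℝ)
    (hratio : ∀ a b : ℕ, 1 ≤ a → a ≤ b → f b / b ≤ f a / a) :
    ∀ (n : ℕ) (Q : Finset α) (jj : α → ℕ), Q.card = n →
      ∑ v ∈ Q, f ((Q.filter fun w => jj v ≤ jj w).card) /
          ((Q.filter fun w => jj v ≤ jj w).card : ℝ) ≤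
        ∑ t ∈ Icc 1 n, f t / t := by
  intro n
  induction n with
  | zero =>
    intro Q jj hQ
    rw [Finset.card_eq_zero.mp hQ]
    simp
  | succ n ih =>
    intro Q jj hQ
    have hQne : Q.Nonempty := Finset.card_pos.mp (by omega)
    obtain ⟨v₀, hv₀Q, hv₀min⟩ := Finset.exists_min_image Q jj hQne
    set Q' := Q.erase v₀ with hQ'
    have hQ'card : Q'.card = n := by rw [hQ', Finset.card_erase_of_mem hv₀Q, hQ]; omega
    have hsplit := Finset.add_sum_erase Q
      (fun v => f ((Q.filter fun w => jj v ≤ jj w).card) /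
        ((Q.filter fun w => jj v ≤ jj w).card : ℝ)) hv₀Q
    try simp only [] at hsplit
    rw [← hsplit]
    have hfull : (Q.filter fun w => jj v₀ ≤ jj w) = Q :=
      Finset.filter_true_of_mem fun w hw => hv₀min w hw
    have hterm : f ((Q.filter fun w => jj v₀ ≤ jj w).card) /
        ((Q.filter fun w => jj v₀ ≤ jj w).card : ℝ) = f (n+1) / (n+1 : ℕ) := by
      rw [hfull, hQ]
    have hbound : ∑ v ∈ Q', f ((Q.filter fun w => jj v ≤ jj w).card) /
        ((Q.filter fun w => jj v ≤ jj w).card : ℝ) ≤ ∑ t ∈ Icc 1 n, f t / t := by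
      have step1 : ∑ v ∈ Q', f ((Q.filter fun w => jj v ≤ jj w).card) /
          ((Q.filter fun w => jj v ≤ jj w).card : ℝ) ≤
          ∑ v ∈ Q', f ((Q'.filter fun w => jj v ≤ jj w).card) /
          ((Q'.filter fun w => jj v ≤ jj w).card : ℝ) := by
        apply Finset.sum_le_sum
        intro v hv
        have hsub : (Q'.filter fun w => jj v ≤ jj w) ⊆ (Q.filter fun w => jj v ≤ jj w) :=
          Finset.filter_subset_filter _ (Finset.erase_subset _ _)
        have h1 : 1 ≤ (Q'.filter fun w => jj v ≤ jj w).card := by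
          apply Finset.card_pos.mpr
          exact ⟨v, Finset.mem_filter.mpr ⟨hv, le_refl _⟩⟩
        exact hratio _ _ h1 (Finset.card_le_card hsub)
      exact le_trans step1 (ih Q' jj hQ'card)
    rw [Finset.sum_Icc_succ_top (by omega : 1 ≤ n + 1)]
    rw [hterm]
    push_cast
    push_cast at hbound
    linarith


theorem greedy_generalCost_approx (f : ℕ → ℝ) (hf0 : f 0 = 0)
    (hfpos : ∀ m : ℕ, 1 ≤ m → 0 < f m)
    (hconc : ∀ j : ℕ, f (j + 2) - f (j + 1) ≤ f (j + 1) - f j)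
    (c' : Cover I) (hc' : c'.IsGreedy) (c : Cover I)
    (hne : (Finset.Icc 1 (I.sets.sup Finset.card)).Nonempty) :
    ∑ S ∈ I.sets, f (c'.partSize S) ≤
      ((Finset.Icc 1 (I.sets.sup Finset.card)).sup' hne fun m =>
          (1 / f m) * ∑ j ∈ Finset.Icc 1 m, f j / (j : ℝ)) *
        ∑ S ∈ I.sets, f (c.partSize S) := by
  obtain ⟨m, P, hcov, hgre, hfib⟩ := hc'
  have hratio := ratio_anti f hf0 hfpos hconc
  set R : ℝ := (Finset.Icc 1 (I.sets.sup Finset.card)).sup' hne fun m =>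
      (1 / f m) * ∑ j ∈ Finset.Icc 1 m, f j / (j : ℝ) with hR
  -- jj v : the greedy step covering v
  have hcov' : ∀ v : V, ∃ j, j < m ∧ v ∈ P j := by
    intro v; obtain ⟨j, hj, hv⟩ := hcov v; exact ⟨j, hj, hv⟩
  classical
  set jj : V → ℕ := fun v => Nat.find (hcov' v) with hjj
  have hjspec : ∀ v, jj v < m ∧ v ∈ P (jj v) := fun v => Nat.find_spec (hcov' v)
  have hjmin : ∀ v, ∀ j' < jj v, v ∉ P j' := by
    intro v j' hj' hvP
    exact Nat.find_min (hcov' v) hj' ⟨lt_trans hj' (hjspec v).1, hvP⟩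
  -- a'_v = |P (jj v)|
  have ha : ∀ v, c'.a v = (P (jj v)).card := by
    intro v
    unfold Cover.a
    rw [hfib (jj v) (hjspec v).1 v (hjspec v).2]
  -- Step 1: LHS = total price
  have step1 : ∑ S ∈ I.sets, f (c'.partSize S) = ∑ v : V, f (c'.a v) / (c'.a v : ℝ) := by
    rw [← Finset.sum_fiberwise_of_maps_to (fun v _ => c'.mem_sets v)
      (fun v => f (c'.a v) / (c'.a v : ℝ))]
    apply Finset.sum_congr rfl
    intro S hS
    have hfilt : ∀ v ∈ Finset.univ.filter (fun v => c'.φ v = S),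
        c'.a v = c'.partSize S := by
      intro v hv
      have hv' : c'.φ v = S := (Finset.mem_filter.mp hv).2
      unfold Cover.a Cover.partSize
      rw [hv']
    rw [Finset.sum_congr rfl (fun v hv => by rw [hfilt v hv])]
    rw [Finset.sum_const]
    unfold Cover.partSize
    rcases Nat.eq_zero_or_pos (Finset.univ.filter (fun v => c'.φ v = S)).card with h0 | hp
    · rw [h0, hf0]; simp
    · rw [nsmul_eq_mul]
      field_simp
  -- Step 2: per-part bound for the cover c
  have step2 : ∀ S ∈ I.sets,
      ∑ v ∈ Finset.univ.filter (fun v => c.φ v = S), f (c'.a v) / (c'.a v : ℝ) ≤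
        R * f (c.partSize S) := by
    intro S hS
    set Q := Finset.univ.filter (fun v => c.φ v = S) with hQ
    rcases Finset.eq_empty_or_nonempty Q with hQe | hQne
    · rw [hQe]
      have : c.partSize S = 0 := by
        unfold Cover.partSize; rw [← hQ, hQe]; simp
      rw [this, hf0, mul_zero, Finset.sum_empty]
    · have hQS : Q ⊆ S := by
        intro w hw
        have : c.φ w = S := (Finset.mem_filter.mp hw).2
        rw [← this]; exact c.self_mem w
      have hQc1 : 1 ≤ Q.card := Finset.card_pos.mpr hQne
      have hQcM : Q.card ≤ I.sets.sup Finset.card :=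
        le_trans (Finset.card_le_card hQS) (Finset.le_sup hS)
      -- price bound per element of Q via rank
      have hrank : ∀ v ∈ Q, f (c'.a v) / (c'.a v : ℝ) ≤
          f ((Q.filter fun w => jj v ≤ jj w).card) /
            ((Q.filter fun w => jj v ≤ jj w).card : ℝ) := by
        intro v hv
        have h1 : 1 ≤ (Q.filter fun w => jj v ≤ jj w).card :=
          Finset.card_pos.mpr ⟨v, Finset.mem_filter.mpr ⟨hv, le_refl _⟩⟩
        have h2 : (Q.filter fun w => jj v ≤ jj w).card ≤ c'.a v := by
          rw [ha v]
          obtain ⟨S', hS', hPeq, hmax⟩ := hgre (jj v) (hjspec v).1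
          refine le_trans (Finset.card_le_card ?_) (hmax S hS)
          intro w hw
          obtain ⟨hwQ, hjw⟩ := Finset.mem_filter.mp hw
          refine Finset.mem_sdiff.mpr ⟨hQS hwQ, ?_⟩
          intro hwcov
          obtain ⟨j', hj', hwP⟩ := Finset.mem_biUnion.mp hwcov
          exact hjmin w j' (lt_of_lt_of_le (Finset.mem_range.mp hj') hjw) hwP
        exact hratio _ _ h1 h2
      have hps : c.partSize S = Q.card := rfl
      calc ∑ v ∈ Q, f (c'.a v) / (c'.a v : ℝ)
          ≤ ∑ v ∈ Q, f ((Q.filter fun w => jj v ≤ jj w).card) /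
              ((Q.filter fun w => jj v ≤ jj w).card : ℝ) :=
            Finset.sum_le_sum hrank
        _ ≤ ∑ t ∈ Finset.Icc 1 Q.card, f t / t :=
            rank_sum f hratio Q.card Q jj rfl
        _ ≤ R * f (c.partSize S) := by
            have hmem : Q.card ∈ Finset.Icc 1 (I.sets.sup Finset.card) :=
              Finset.mem_Icc.mpr ⟨hQc1, hQcM⟩
            have hle := Finset.le_sup' (f := fun m =>
              (1 / f m) * ∑ j ∈ Finset.Icc 1 m, f j / (j : ℝ)) hmem
            have hfQ : 0 < f Q.card := hfpos _ hQc1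
            rw [hps]
            have := mul_le_mul_of_nonneg_right hle (le_of_lt hfQ)
            calc ∑ t ∈ Finset.Icc 1 Q.card, f t / t
                = (1 / f Q.card * ∑ j ∈ Finset.Icc 1 Q.card, f j / (j:ℝ)) * f Q.card := by
                  field_simp
              _ ≤ R * f Q.card := this
  -- combine
  rw [step1, ← Finset.sum_fiberwise_of_maps_to (fun v _ => c.mem_sets v)
      (fun v => f (c'.a v) / (c'.a v : ℝ)), Finset.mul_sum]
  exact Finset.sum_le_sum fun S hS => le_trans (step2 S hS)
    (le_of_eq rfl)
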